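/- Let ρ be a positive semidefinite trace-class operator with trace 1 on a Hilbert space, with eigenvalues λ₁ ≥ λ₂ ≥ … in decreasing order. For any state ρ_r of rank r, the tail of the eigenvalues satisfies Σ_{j>r} λⱼ ≤ (1/2)‖ρ − ρ_r‖₁. -/

import Mathlib

open Matrix ComplexOrder

/-- The trace norm `‖A‖₁ = Tr √(AᴴA)` of a complex matrix. -/
noncomputable def traceNorm {ι : Type*} [Fintype ι] [DecidableEq ι] (A : Matrix ι ι ℂ) : ℝ :=
  ((Matrix.posSemidef_conjTranspose_mul_self A).isHermitian.eigenvectorUnitary.1 *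
    diagonal (((↑) : ℝ → ℂ) ∘ (√·) ∘ (Matrix.posSemidef_conjTranspose_mul_self A).isHermitian.eigenvalues) *
    (star (Matrix.posSemidef_conjTranspose_mul_self A).isHermitian.eigenvectorUnitary :
      Matrix ι ι ℂ)).trace.re

open scoped MatrixOrder

variable {d : ℕ}

lemma diag_nonneg' {A : Matrix (Fin d) (Fin d) ℂ} (hA : A.PosSemidef) (i : Fin d) :
    0 ≤ A i i := by
  exact hA.diag_nonneg

lemma trace_mul_eig {A : Matrix (Fin d) (Fin d) ℂ} (hA : A.IsHermitian)
    (P : Matrix (Fin d) (Fin d) ℂ) :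
    (P * A).trace = ∑ i, (hA.eigenvalues i : ℂ) *
      ((star (hA.eigenvectorUnitary : Matrix (Fin d) (Fin d) ℂ) * P *
        (hA.eigenvectorUnitary : Matrix (Fin d) (Fin d) ℂ)) i i) := by
  set U : Matrix (Fin d) (Fin d) ℂ := (hA.eigenvectorUnitary : Matrix (Fin d) (Fin d) ℂ) with hU
  conv_lhs => rw [hA.spectral_theorem, Unitary.conjStarAlgAut_apply]
  rw [show P * ((U : Matrix (Fin d) (Fin d) ℂ) * diagonal (RCLike.ofReal ∘ hA.eigenvalues) * star U)
      = (P * U * diagonal (RCLike.ofReal ∘ hA.eigenvalues)) * star U by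
    simp only [mul_assoc]]
  rw [Matrix.trace_mul_comm]
  rw [show star U * (P * U * diagonal (RCLike.ofReal ∘ hA.eigenvalues))
      = (star U * P * U) * diagonal (RCLike.ofReal ∘ hA.eigenvalues) by
    simp only [mul_assoc]]
  simp [Matrix.trace, Matrix.diag, mul_diagonal, mul_comm]

lemma trace_eq_sum_eig {A : Matrix (Fin d) (Fin d) ℂ} (hA : A.IsHermitian) :
    A.trace = ∑ i, (hA.eigenvalues i : ℂ) := by
  have h := trace_mul_eig hA 1
  have hUU : star (hA.eigenvectorUnitary : Matrix (Fin d) (Fin d) ℂ) *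
      (hA.eigenvectorUnitary : Matrix (Fin d) (Fin d) ℂ) = 1 :=
    mem_unitaryGroup_iff'.mp hA.eigenvectorUnitary.2
  rw [Matrix.one_mul] at h
  rw [h, Matrix.mul_one, hUU]
  simp [Matrix.one_apply]

lemma traceNorm_eq_sum_abs {A : Matrix (Fin d) (Fin d) ℂ} (hA : A.IsHermitian) :
    traceNorm A = ∑ i, |hA.eigenvalues i| := by
  set U : Matrix (Fin d) (Fin d) ℂ := (hA.eigenvectorUnitary : Matrix (Fin d) (Fin d) ℂ) with hU
  have hUU : star U * U = 1 := mem_unitaryGroup_iff'.mp hA.eigenvectorUnitary.2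
  set S : Matrix (Fin d) (Fin d) ℂ :=
    U * diagonal (fun i => (Complex.ofReal |hA.eigenvalues i|)) * star U with hSdef
  have hS : S.PosSemidef := by
    have h := Matrix.PosSemidef.mul_mul_conjTranspose_same
      (Matrix.PosSemidef.diagonal (fun i => by positivity) :
        (diagonal (fun i => (Complex.ofReal |hA.eigenvalues i|))).PosSemidef) U
    simpa [Matrix.star_eq_conjTranspose, hSdef] using h
  have key : ∀ (v w : Fin d → ℂ), (U * diagonal v * star U) * (U * diagonal w * star U)
      = U * diagonal (fun i => v i * w i) * star U := by
    intro v w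
    calc (U * diagonal v * star U) * (U * diagonal w * star U)
        = U * (diagonal v * ((star U * U) * (diagonal w * star U))) := by
          simp only [mul_assoc]
      _ = U * (diagonal v * (diagonal w * star U)) := by rw [hUU, one_mul]
      _ = U * diagonal (fun i => v i * w i) * star U := by
          simp only [← mul_assoc, diagonal_mul_diagonal]
  have hsq : S ^ 2 = Aᴴ * A := by
    have hAA : Aᴴ = A := hA
    rw [pow_two, hAA]
    conv_rhs => rw [hA.spectral_theorem, Unitary.conjStarAlgAut_apply]
    have hdd : (fun i => Complex.ofReal |hA.eigenvalues i| * Complex.ofReal |hA.eigenvalues i|)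
        = (fun i => (RCLike.ofReal ∘ hA.eigenvalues) i * (RCLike.ofReal ∘ hA.eigenvalues) i :
            Fin d → ℂ) := by
      funext i
      simp only [Function.comp_apply, ← Complex.ofReal_mul, abs_mul_abs_self]
      norm_cast
    rw [hSdef, key, key, hdd]
  have hB := Matrix.posSemidef_conjTranspose_mul_self A
  have hSsqrt : S = hB.isHermitian.cfc Real.sqrt := by
    have h1 : CFC.sqrt (Aᴴ * A) = S :=
      CFC.sqrt_unique (by rw [← pow_two]; exact hsq) (nonneg_iff_posSemidef.mpr hS)
    rw [← h1, CFC.sqrt_eq_cfc, cfc_nnreal_eq_real _ _ (nonneg_iff_posSemidef.mpr hB),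
      hB.isHermitian.cfc_eq]
    unfold IsHermitian.cfc
    congr 2
    funext i
    simp [Real.coe_sqrt, Real.coe_toNNReal', hB.eigenvalues_nonneg i]
  have htr : S.trace = ∑ i, (Complex.ofReal |hA.eigenvalues i|) := by
    rw [hSdef, Matrix.trace_mul_comm]
    rw [show star U * (U * diagonal (fun i => (Complex.ofReal |hA.eigenvalues i|)))
        = (star U * U) * diagonal (fun i => (Complex.ofReal |hA.eigenvalues i|)) by simp only [mul_assoc]]
    rw [hUU, one_mul, trace_diagonal]
  have hTN : traceNorm A = S.trace.re := by rw [hSsqrt]; rfl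
  rw [hTN, htr]
  simp

lemma card_filter_lt' (d r : ℕ) (hr : r ≤ d) :
    (Finset.univ.filter (fun j : Fin d => (j : ℕ) < r)).card = r := by
  have h : Finset.univ.filter (fun j : Fin d => (j:ℕ) < r) =
      (Finset.range r).attachFin (fun m hm => lt_of_lt_of_le (Finset.mem_range.mp hm) hr) := by
    ext j
    simp [Finset.mem_attachFin]
  rw [h, Finset.card_attachFin, Finset.card_range]

lemma sum_mul_le_head (lam c : Fin d → ℝ) (hdecr : Antitone lam)
    (hlam : ∀ j, 0 ≤ lam j) (hc0 : ∀ j, 0 ≤ c j) (hc1 : ∀ j, c j ≤ 1)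
    {r : ℕ} (hr : r < d) (hsum : ∑ j, c j ≤ r) :
    ∑ j, lam j * c j ≤ ∑ j ∈ Finset.univ.filter (fun j : Fin d => (j:ℕ) < r), lam j := by
  classical
  set t := lam ⟨r, hr⟩ with ht
  have htn : 0 ≤ t := hlam _
  set s := Finset.univ.filter (fun j : Fin d => (j:ℕ) < r) with hs
  set sc := Finset.univ.filter (fun j : Fin d => ¬ (j:ℕ) < r) with hsc
  have hcard : s.card = r := card_filter_lt' d r hr.le
  have hsplitc : ∑ j ∈ s, c j + ∑ j ∈ sc, c j = ∑ j, c j :=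
    Finset.sum_filter_add_sum_filter_not Finset.univ _ _
  have hsplitl : ∑ j ∈ s, lam j * c j + ∑ j ∈ sc, lam j * c j = ∑ j, lam j * c j :=
    Finset.sum_filter_add_sum_filter_not Finset.univ _ _
  have A1 : ∑ j ∈ s, lam j * c j ≤ ∑ j ∈ s, (lam j + t * (c j - 1)) := by
    refine Finset.sum_le_sum fun j hj => ?_
    have hj' : (j:ℕ) < r := by simpa [hs] using (Finset.mem_filter.mp hj).2
    have hle : t ≤ lam j := hdecr (by simp [Fin.le_def]; omega)
    nlinarith [mul_nonneg (sub_nonneg.mpr hle) (sub_nonneg.mpr (hc1 j))]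
  have A2 : ∑ j ∈ sc, lam j * c j ≤ ∑ j ∈ sc, t * c j := by
    refine Finset.sum_le_sum fun j hj => ?_
    have hj' : ¬ (j:ℕ) < r := by simpa [hsc] using (Finset.mem_filter.mp hj).2
    have hle : lam j ≤ t := hdecr (by simp [Fin.le_def]; omega)
    exact mul_le_mul_of_nonneg_right hle (hc0 j)
  have B1 : ∑ j ∈ s, (lam j + t * (c j - 1))
      = ∑ j ∈ s, lam j + t * (∑ j ∈ s, c j - r) := by
    rw [Finset.sum_add_distrib, ← Finset.mul_sum, Finset.sum_sub_distrib,
      Finset.sum_const, hcard]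
    simp [mul_comm]
  have B2 : ∑ j ∈ sc, t * c j = t * ∑ j ∈ sc, c j := by rw [Finset.mul_sum]
  have C : t * (∑ j ∈ s, c j - r) + t * ∑ j ∈ sc, c j = t * (∑ j, c j - r) := by
    rw [← hsplitc]; ring
  nlinarith [mul_nonneg htn (sub_nonneg.mpr hsum)]

/-- Let `ρ` be a state (PSD, trace `1`) with eigenvalues `lam 0 ≥ lam 1 ≥ …` listed in
decreasing order.  For any state `ρᵣ` of rank at most `r`, the eigenvalue tail satisfies
`∑_{j ≥ r} lam j ≤ (1/2) ‖ρ − ρᵣ‖₁`. -/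
theorem eigenvalue_tail_le_traceDist (d : ℕ) (ρ : Matrix (Fin d) (Fin d) ℂ)
    (hρ : ρ.PosSemidef) (htr : ρ.trace = 1)
    (lam : Fin d → ℝ) (hdecr : Antitone lam)
    (hperm : ∃ σ : Equiv.Perm (Fin d), ∀ j, lam j = hρ.isHermitian.eigenvalues (σ j))
    (r : ℕ) (ρr : Matrix (Fin d) (Fin d) ℂ)
    (hρr : ρr.PosSemidef) (htrr : ρr.trace = 1) (hrank : ρr.rank ≤ r) :
    ∑ j ∈ Finset.univ.filter (fun j : Fin d => r ≤ (j : ℕ)), lam j ≤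
      (1 / 2) * traceNorm (ρ - ρr) := by
  classical
  obtain ⟨σ, hσ⟩ := hperm
  have hΔ : (ρ - ρr).IsHermitian := hρ.1.sub hρr.1
  set μ : Fin d → ℝ := hΔ.eigenvalues with hμ
  have htrN : traceNorm (ρ - ρr) = ∑ i, |μ i| := traceNorm_eq_sum_abs hΔ
  have htrN0 : 0 ≤ traceNorm (ρ - ρr) := by
    rw [htrN]; positivity
  by_cases hrd : d ≤ r
  · have hempty : Finset.univ.filter (fun j : Fin d => r ≤ (j : ℕ)) = ∅ := by
      ext j; simp only [Finset.mem_filter, Finset.mem_univ, true_and, Finset.notMem_empty,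
        iff_false]
      omega
    rw [hempty, Finset.sum_empty]
    linarith
  push_neg at hrd
  -- the unitaries
  set W : Matrix (Fin d) (Fin d) ℂ := (hρ.1.eigenvectorUnitary : Matrix (Fin d) (Fin d) ℂ) with hW
  set V : Matrix (Fin d) (Fin d) ℂ := (hρr.1.eigenvectorUnitary : Matrix (Fin d) (Fin d) ℂ) with hV
  set U : Matrix (Fin d) (Fin d) ℂ := (hΔ.eigenvectorUnitary : Matrix (Fin d) (Fin d) ℂ) with hU
  have hWW : star W * W = 1 := mem_unitaryGroup_iff'.mp hρ.1.eigenvectorUnitary.2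
  have hWW' : W * star W = 1 := mem_unitaryGroup_iff.mp hρ.1.eigenvectorUnitary.2
  have hVV : star V * V = 1 := mem_unitaryGroup_iff'.mp hρr.1.eigenvectorUnitary.2
  have hVV' : V * star V = 1 := mem_unitaryGroup_iff.mp hρr.1.eigenvectorUnitary.2
  have hUU : star U * U = 1 := mem_unitaryGroup_iff'.mp hΔ.eigenvectorUnitary.2
  -- the support projector of ρr
  set g : Fin d → ℂ := fun k => if hρr.1.eigenvalues k = 0 then 0 else 1 with hg
  set Pr : Matrix (Fin d) (Fin d) ℂ := V * diagonal g * star V with hPrdef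
  have hg0 : ∀ k, 0 ≤ g k := by
    intro k; rw [hg]; dsimp only; split <;> norm_num
  have hPr : Pr.PosSemidef := by
    have h := Matrix.PosSemidef.mul_mul_conjTranspose_same
      (Matrix.PosSemidef.diagonal hg0) V
    simpa [Matrix.star_eq_conjTranspose, hPrdef] using h
  have h1Pr : (1 - Pr).PosSemidef := by
    have heq : 1 - Pr = V * diagonal (fun k => 1 - g k) * star V := by
      have : diagonal (fun k => 1 - g k) = 1 - diagonal g := by
        rw [← diagonal_one, diagonal_sub]
      rw [this, Matrix.mul_sub, Matrix.mul_one, Matrix.sub_mul, hVV']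
    rw [heq]
    have h := Matrix.PosSemidef.mul_mul_conjTranspose_same
      (Matrix.PosSemidef.diagonal (d := fun k => 1 - g k) (fun k => by
        rw [hg]; dsimp only; split <;> norm_num)) V
    simpa [Matrix.star_eq_conjTranspose] using h
  -- Pr * ρr = ρr
  have hPrρr : Pr * ρr = ρr := by
    conv_lhs => rw [hρr.1.spectral_theorem, Unitary.conjStarAlgAut_apply]
    conv_rhs => rw [hρr.1.spectral_theorem, Unitary.conjStarAlgAut_apply]
    calc Pr * (V * diagonal (RCLike.ofReal ∘ hρr.1.eigenvalues) * star V)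
        = V * (diagonal g * ((star V * V) * (diagonal (RCLike.ofReal ∘ hρr.1.eigenvalues) * star V))) := by
          rw [hPrdef]; simp only [mul_assoc]
      _ = V * (diagonal g * (diagonal (RCLike.ofReal ∘ hρr.1.eigenvalues) * star V)) := by
          rw [hVV, one_mul]
      _ = V * diagonal (fun k => g k * (RCLike.ofReal ∘ hρr.1.eigenvalues) k) * star V := by
          simp only [← mul_assoc, diagonal_mul_diagonal]
      _ = V * diagonal (RCLike.ofReal ∘ hρr.1.eigenvalues) * star V := by
          have hfun : (fun k => g k * (RCLike.ofReal ∘ hρr.1.eigenvalues) k)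
              = (RCLike.ofReal ∘ hρr.1.eigenvalues : Fin d → ℂ) := by
            funext k
            rw [hg]; dsimp only [Function.comp_apply]
            split_ifs with h
            · simp [h]
            · simp
          rw [hfun]
  -- trace Pr = rank ρr
  have htrPr : Pr.trace = (ρr.rank : ℂ) := by
    rw [hPrdef, Matrix.trace_mul_comm]
    rw [show star V * (V * diagonal g) = (star V * V) * diagonal g by simp only [mul_assoc]]
    rw [hVV, one_mul, trace_diagonal]
    rw [hρr.1.rank_eq_card_non_zero_eigs]
    rw [hg]
    simp only []
    rw [Fintype.card_subtype]
    rw [show (fun k => if hρr.1.eigenvalues k = 0 then (0:ℂ) else 1)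
        = (fun k => if hρr.1.eigenvalues k ≠ 0 then (1:ℂ) else 0) by
      funext k; by_cases h : hρr.1.eigenvalues k = 0 <;> simp [h]]
    rw [Finset.sum_boole]
  -- bounded expectation values
  have unit_re : ∀ {z : ℂ}, 0 ≤ z → z ≤ 1 → z.im = 0 ∧ 0 ≤ z.re ∧ z.re ≤ 1 := by
    intro z h0 h1
    rw [Complex.le_def] at h0 h1
    simp_all
  have hconj : ∀ (X : Matrix (Fin d) (Fin d) ℂ), star X * X = 1 →
      ∀ k, 0 ≤ (star X * Pr * X) k k ∧ (star X * Pr * X) k k ≤ 1 := by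
    intro X hX k
    constructor
    · exact diag_nonneg' (by simpa [Matrix.star_eq_conjTranspose] using
        hPr.conjTranspose_mul_mul_same X) k
    · have h2 : (star X * (1 - Pr) * X).PosSemidef := by
        simpa [Matrix.star_eq_conjTranspose] using h1Pr.conjTranspose_mul_mul_same X
      have h3 := diag_nonneg' h2 k
      have heq : star X * (1 - Pr) * X = 1 - star X * Pr * X := by
        rw [Matrix.mul_sub, Matrix.mul_one, Matrix.sub_mul, hX]
      rw [heq, Matrix.sub_apply, Matrix.one_apply_eq] at h3
      exact sub_nonneg.mp h3
  have hqb : ∀ k, ((star W * Pr * W) k k).im = 0 ∧ 0 ≤ ((star W * Pr * W) k k).re ∧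
      ((star W * Pr * W) k k).re ≤ 1 := fun k =>
    unit_re (hconj W hWW k).1 (hconj W hWW k).2
  have hpb : ∀ i, ((star U * Pr * U) i i).im = 0 ∧ 0 ≤ ((star U * Pr * U) i i).re ∧
      ((star U * Pr * U) i i).re ≤ 1 := fun i =>
    unit_re (hconj U hUU i).1 (hconj U hUU i).2
  -- sum of expectation values = trace Pr
  have hqsum : ∑ k, (star W * Pr * W) k k = Pr.trace := by
    have h : ∑ k, (star W * Pr * W) k k = (star W * Pr * W).trace := by
      simp [Matrix.trace, Matrix.diag]
    rw [h, Matrix.trace_mul_cycle, hWW', Matrix.one_mul]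
  -- trace expansions
  have h1 : (Pr * ρ).trace = ∑ k, (hρ.1.eigenvalues k : ℂ) * ((star W * Pr * W) k k) := by
    have := trace_mul_eig hρ.1 Pr
    rw [← hW] at this
    exact this
  have h2 : (Pr * (ρ - ρr)).trace = ∑ i, (μ i : ℂ) * ((star U * Pr * U) i i) := by
    have := trace_mul_eig hΔ Pr
    rw [← hU] at this
    exact this
  have hmulre : ∀ (a : ℝ) (z : ℂ), ((a : ℂ) * z).re = a * z.re - a * 0 * z.im := by
    intro a z; simp [Complex.mul_re]
  have hre1 : (Pr * ρ).trace.re = ∑ k, hρ.1.eigenvalues k * ((star W * Pr * W) k k).re := by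
    rw [h1, Complex.re_sum]
    refine Finset.sum_congr rfl fun k _ => ?_
    rw [Complex.mul_re]
    simp
  have hre2 : (Pr * (ρ - ρr)).trace.re = ∑ i, μ i * ((star U * Pr * U) i i).re := by
    rw [h2, Complex.re_sum]
    refine Finset.sum_congr rfl fun i _ => ?_
    rw [Complex.mul_re]
    simp
  -- sum of c's ≤ r
  have hcsum : ∑ j, ((star W * Pr * W) (σ j) (σ j)).re ≤ (r : ℝ) := by
    rw [Equiv.sum_comp σ (fun k => ((star W * Pr * W) k k).re)]
    rw [← Complex.re_sum, hqsum, htrPr]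
    simpa using (Nat.cast_le.mpr hrank : (ρr.rank : ℝ) ≤ r)
  -- the Ky Fan step
  have hkey : ∑ j, lam j * ((star W * Pr * W) (σ j) (σ j)).re
      ≤ ∑ j ∈ Finset.univ.filter (fun j : Fin d => (j:ℕ) < r), lam j :=
    sum_mul_le_head lam _ hdecr (fun j => by rw [hσ j]; exact hρ.eigenvalues_nonneg _)
      (fun j => (hqb (σ j)).2.1) (fun j => (hqb (σ j)).2.2) hrd hcsum
  have hlhs : ∑ j, lam j * ((star W * Pr * W) (σ j) (σ j)).re = (Pr * ρ).trace.re := by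
    rw [hre1, ← Equiv.sum_comp σ (fun k => hρ.1.eigenvalues k * ((star W * Pr * W) k k).re)]
    refine Finset.sum_congr rfl fun j _ => ?_
    rw [hσ j]
  -- total eigenvalue sum is 1
  have hlamsum : ∑ j, lam j = 1 := by
    have h := trace_eq_sum_eig hρ.1
    rw [htr] at h
    have h' : ∑ k, hρ.1.eigenvalues k = 1 := by
      have := congrArg Complex.re h.symm
      simpa [Complex.re_sum] using this
    calc ∑ j, lam j = ∑ j, hρ.1.eigenvalues (σ j) := Finset.sum_congr rfl fun j _ => hσ j
      _ = 1 := by rw [Equiv.sum_comp σ]; exact h'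
  -- tail = 1 - head
  have hsplit : ∑ j ∈ Finset.univ.filter (fun j : Fin d => r ≤ (j:ℕ)), lam j
      = 1 - ∑ j ∈ Finset.univ.filter (fun j : Fin d => (j:ℕ) < r), lam j := by
    have hff : Finset.univ.filter (fun j : Fin d => r ≤ (j:ℕ))
        = Finset.univ.filter (fun j : Fin d => ¬ (j:ℕ) < r) := by
      ext j
      simp only [Finset.mem_filter, Finset.mem_univ, true_and, not_lt]
    rw [hff, eq_sub_iff_add_eq, add_comm, Finset.sum_filter_add_sum_filter_not]
    exact hlamsum
  -- trace identity
  have htrid : (Pr * ρ).trace = (Pr * (ρ - ρr)).trace + 1 := by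
    rw [Matrix.mul_sub, Matrix.trace_sub, hPrρr, htrr]
    ring
  have htridre : (Pr * ρ).trace.re = (Pr * (ρ - ρr)).trace.re + 1 := by
    rw [htrid]
    simp
  -- sum of μ is 0
  have hμ0 : ∑ i, μ i = 0 := by
    have h := trace_eq_sum_eig hΔ
    rw [Matrix.trace_sub, htr, htrr, sub_self] at h
    have := congrArg Complex.re h.symm
    simpa [Complex.re_sum] using this
  -- pointwise bound
  have hbound : ∑ i, (- μ i) * ((star U * Pr * U) i i).re ≤ ∑ i, (|μ i| - μ i) / 2 := by
    refine Finset.sum_le_sum fun i _ => ?_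
    obtain ⟨-, hre0, hre1'⟩ := hpb i
    rcases abs_cases (μ i) with ⟨habs, hpos⟩ | ⟨habs, hneg⟩
    · nlinarith
    · nlinarith
  have e1 : ∑ i, (- μ i) * ((star U * Pr * U) i i).re
      = - ∑ i, μ i * ((star U * Pr * U) i i).re := by
    rw [← Finset.sum_neg_distrib]
    exact Finset.sum_congr rfl fun i _ => by ring
  have e2 : ∑ i, (|μ i| - μ i) / 2 = (∑ i, |μ i|) / 2 - (∑ i, μ i) / 2 := by
    rw [← Finset.sum_div, Finset.sum_sub_distrib, sub_div]
  rw [hsplit, htrN]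
  linarith [hkey, hlhs, hre2, hμ0, hbound, htridre, e1, e2]
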